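/- Let p be a positive integer, d a residue with gcd(p, d) = 1, a any residue, and q a positive integer with q < p. If the TG-sequence with points {(a + id) mod p : i = 0, …, q−1} has exactly one gap size (i.e., all of its gaps have the same size), then q = 1. -/

import Mathlib

/-- For a set `B` of residues in `{0, …, p−1}` and a point `x`, the size of the
(cyclic) gap from `x` to the next point of `B` modulo `p`: the least `t > 0`
with `(x + t) mod p ∈ B`.  For `x ∈ B` this recovers the differences
`a_{i+1} − a_i` of the sorted points, together with the wrap-around gap
`p + a_1 − a_q`. -/
noncomputable def gapAt (p : ℕ) (B : Finset ℕ) (x : ℕ) : ℕ :=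
  sInf {t : ℕ | 0 < t ∧ (x + t) % p ∈ B}

/-- The set of gap sizes of `B` as a subset of residues modulo `p`. -/
noncomputable def gapSizes (p : ℕ) (B : Finset ℕ) : Finset ℕ :=
  B.image (gapAt p B)

/-- If a TG-sequence `{(a + i d) mod p : 0 ≤ i < q}` with `gcd(p, d) = 1` and
`0 < q < p` has exactly one gap size, then `q = 1`. -/
theorem one_gap_size (p d a q : ℕ) (hp : 0 < p) (hd : Nat.gcd p d = 1)
    (hq : 0 < q) (hqp : q < p)
    (B : Finset ℕ) (hB : B = (Finset.range q).image (fun i => (a + i * d) % p))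
    (hone : (gapSizes p B).card = 1) :
    q = 1 := by
  by_contra hq1
  have hq2 : 2 ≤ q := by omega
  -- elements of B are < p
  have hmem : ∀ x ∈ B, x < p := by
    intro x hx
    rw [hB, Finset.mem_image] at hx
    obtain ⟨i, _, rfl⟩ := hx
    exact Nat.mod_lt _ hp
  have hb0 : a % p ∈ B := by
    rw [hB, Finset.mem_image]
    exact ⟨0, Finset.mem_range.mpr hq, by simp⟩
  -- the common gap g
  obtain ⟨g, hg⟩ := Finset.card_eq_one.mp hone
  have hgap : ∀ x ∈ B, gapAt p B x = g := by
    intro x hx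
    have h1 : gapAt p B x ∈ gapSizes p B := Finset.mem_image_of_mem _ hx
    rw [hg, Finset.mem_singleton] at h1
    exact h1
  simp only [gapAt] at hgap
  have hpmemS : ∀ x ∈ B, p ∈ {t : ℕ | 0 < t ∧ (x + t) % p ∈ B} := by
    intro x hx
    exact ⟨hp, by rwa [Nat.add_mod_right, Nat.mod_eq_of_lt (hmem x hx)]⟩
  have hgmem : ∀ x ∈ B, 0 < g ∧ (x + g) % p ∈ B := by
    intro x hx
    have h1 := Nat.sInf_mem (⟨p, hpmemS x hx⟩ : Set.Nonempty {t : ℕ | 0 < t ∧ (x + t) % p ∈ B})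
    rwa [hgap x hx] at h1
  have hgpos : 0 < g := (hgmem _ hb0).1
  have hglep : g ≤ p := by
    have h1 := Nat.sInf_le (hpmemS _ hb0)
    rwa [hgap _ hb0] at h1
  have hmin : ∀ x ∈ B, ∀ t, 0 < t → t < g → (x + t) % p ∉ B := by
    intro x hx t ht htg hmem'
    have h1 : t < sInf {t : ℕ | 0 < t ∧ (x + t) % p ∈ B} := lt_of_lt_of_le htg (hgap x hx).ge
    exact Nat.notMem_of_lt_sInf h1 ⟨ht, hmem'⟩
  -- closure under repeated addition of g
  have hiter : ∀ k, ∀ x ∈ B, (x + k * g) % p ∈ B := by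
    intro k
    induction k with
    | zero => intro x hx; simpa [Nat.mod_eq_of_lt (hmem x hx)] using hx
    | succ n ih =>
      intro x hx
      have h1 := (hgmem _ (ih x hx)).2
      rwa [Nat.mod_add_mod, show x + n * g + g = x + (n + 1) * g by ring] at h1
  -- g divides p
  have hdvd : g ∣ p := by
    rcases eq_or_lt_of_le hglep with h | h
    · exact h ▸ dvd_refl p
    · set c := Nat.gcd g p with hc
      have hcg : c ∣ g := Nat.gcd_dvd_left g p
      have hcp : c < p := lt_of_le_of_lt (Nat.le_of_dvd hgpos hcg) h
      obtain ⟨m, -, hm⟩ := Nat.exists_mul_mod_eq_gcd hcp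
      have hcpos : 0 < c := Nat.gcd_pos_of_pos_right g hp
      have hmc : m * g ≡ c [MOD p] := by
        show m * g % p = c % p
        rw [Nat.mul_comm m g, hm, ← hc, Nat.mod_eq_of_lt hcp]
      have hcmem : (a % p + c) % p ∈ B := by
        have h1 := hiter m _ hb0
        rwa [show ((a % p + m * g) % p = (a % p + c) % p) from Nat.ModEq.add_left _ hmc] at h1
      have hcg' : c = g := by
        by_contra hne
        have : c < g := lt_of_le_of_ne (Nat.le_of_dvd hgpos hcg) hne
        exact hmin _ hb0 c hcpos this hcmem
      exact hcg' ▸ Nat.gcd_dvd_right g p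
  -- injectivity helper for arcs
  have hkey : ∀ x ∈ B, ∀ y ∈ B, ∀ t s : ℕ, t < g → s ≤ t → (x + t) % p = (y + s) % p →
      x = y ∧ t = s := by
    intro x hx y hy t s htg hst heq
    have h1 : x + (t - s) + s ≡ y + s [MOD p] := by
      rw [show x + (t - s) + s = x + t by omega]; exact heq
    have h2 : (x + (t - s)) % p = y % p := Nat.ModEq.add_right_cancel' s h1
    rw [Nat.mod_eq_of_lt (hmem y hy)] at h2
    rcases Nat.eq_zero_or_pos (t - s) with h0 | h0
    · have hts : t = s := by omega
      subst hts
      rw [h0, Nat.add_zero, Nat.mod_eq_of_lt (hmem x hx)] at h2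
      exact ⟨h2, rfl⟩
    · exact absurd (h2 ▸ hy) (hmin x hx (t - s) h0 (by omega))
  -- card B * g ≤ p
  have hcardB : B.card = q := by
    rw [hB, Finset.card_image_of_injOn, Finset.card_range]
    intro i hi j hj h
    simp only [Finset.coe_range, Set.mem_Iio] at hi hj
    have h1 : a + i * d ≡ a + j * d [MOD p] := h
    have h2 : i * d ≡ j * d [MOD p] := h1.add_left_cancel' a
    have h3 : i ≡ j [MOD p] := h2.cancel_right_of_coprime hd
    have := h3.eq_of_lt_of_lt (by omega) (by omega)
    exact this
  have harc : q * g ≤ p := by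
    have hinj : Set.InjOn (fun z : ℕ × ℕ => (z.1 + z.2) % p) ↑(B ×ˢ Finset.range g) := by
      rintro ⟨x, t⟩ hxt ⟨y, s⟩ hys h
      simp only [Finset.coe_product, Set.mem_prod, Finset.mem_coe, Finset.coe_range,
        Set.mem_Iio] at hxt hys
      simp only at h
      rcases le_total s t with hle | hle
      · obtain ⟨h1, h2⟩ := hkey x hxt.1 y hys.1 t s hxt.2 hle h
        simp [h1, h2]
      · obtain ⟨h1, h2⟩ := hkey y hys.1 x hxt.1 s t hys.2 hle h.symm
        simp [h1, h2]
    have hsub : (B ×ˢ Finset.range g).image (fun z : ℕ × ℕ => (z.1 + z.2) % p) ⊆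
        Finset.range p := by
      intro y hy
      rw [Finset.mem_image] at hy
      obtain ⟨z, _, rfl⟩ := hy
      exact Finset.mem_range.mpr (Nat.mod_lt _ hp)
    have := Finset.card_le_card hsub
    rwa [Finset.card_image_of_injOn hinj, Finset.card_product, Finset.card_range,
      Finset.card_range, hcardB] at this
  -- the orbit
  set O : Finset ℕ := (Finset.range (p / g)).image (fun j => (a % p + j * g) % p) with hO
  have hOsub : O ⊆ B := by
    intro y hy
    rw [hO, Finset.mem_image] at hy
    obtain ⟨j, _, rfl⟩ := hy
    exact hiter j _ hb0
  have hOkey : ∀ j1 j2 : ℕ, j1 ≤ j2 → j1 < p / g → j2 < p / g →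
      (a % p + j1 * g) % p = (a % p + j2 * g) % p → j1 = j2 := by
    intro j1 j2 hle h1 h2 heq
    have e1 : j1 * g ≡ j2 * g [MOD p] := (Nat.ModEq.add_left_cancel' (a % p) heq)
    have e2 : p ∣ j2 * g - j1 * g := (Nat.modEq_iff_dvd' (Nat.mul_le_mul_right g hle)).mp e1
    rw [← Nat.sub_mul] at e2
    have e3 : (p / g) * g ∣ (j2 - j1) * g := by rwa [Nat.div_mul_cancel hdvd]
    have e4 : p / g ∣ j2 - j1 := (Nat.mul_dvd_mul_iff_right hgpos).mp e3
    rcases Nat.eq_zero_or_pos (j2 - j1) with h0 | h0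
    · omega
    · have := Nat.le_of_dvd h0 e4; omega
  have hOcard : O.card = p / g := by
    rw [hO, Finset.card_image_of_injOn, Finset.card_range]
    intro j1 hj1 j2 hj2 h
    simp only [Finset.coe_range, Set.mem_Iio] at hj1 hj2
    rcases le_total j1 j2 with hle | hle
    · exact hOkey j1 j2 hle hj1 hj2 h
    · exact (hOkey j2 j1 hle hj2 hj1 h.symm).symm
  have hqle : q ≤ p / g := (Nat.le_div_iff_mul_le hgpos).mpr harc
  have hOB : O = B := Finset.eq_of_subset_of_card_le hOsub (by rw [hOcard, hcardB]; exact hqle)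
  -- locate (a + d) % p in the orbit
  have had : (a + d) % p ∈ O := by
    rw [hOB, hB, Finset.mem_image]
    exact ⟨1, Finset.mem_range.mpr (by omega), by rw [one_mul]⟩
  rw [hO, Finset.mem_image] at had
  obtain ⟨j, _, hjeq⟩ := had
  -- g divides d
  have hgd : g ∣ d := by
    have h1 : (a % p + j * g) % p % g = (a + d) % p % g := by rw [hjeq]
    rw [Nat.mod_mod_of_dvd _ hdvd, Nat.mod_mod_of_dvd _ hdvd,
      Nat.add_mul_mod_self_right, Nat.mod_mod_of_dvd _ hdvd] at h1
    have h2 : a ≡ a + d [MOD g] := h1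
    have h3 := (Nat.modEq_iff_dvd' (Nat.le_add_right a d)).mp h2
    simpa using h3
  have hg1 : g = 1 := Nat.dvd_one.mp (hd ▸ Nat.dvd_gcd hdvd hgd)
  have hfin : p / g = q := by rw [← hOcard, hOB, hcardB]
  rw [hg1, Nat.div_one] at hfin
  omega
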